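/- Let K be a field with a non-archimedean absolute value. If p : A → ℝ≥0 is a map on a K-algebra A satisfying p(fg) = p(f)p(g), p(1) = 1, p(α) = |α| for all α ∈ K, then p satisfies the triangle inequality p(f+g) ≤ p(f) + p(g) for all f,g if and only if it satisfies the ultrametric inequality p(f+g) ≤ max(p(f), p(g)) for all f,g. -/

import Mathlib

/-- If `x^n ≤ (n+1) * y^n` for all `n`, then `x ≤ y` (in `ℝ≥0`). -/
lemma aux_pow_le {x y : NNReal} (h : ∀ n : ℕ, (x:ℝ)^n ≤ (n+1) * (y:ℝ)^n) : x ≤ y := by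
  by_contra hlt
  push_neg at hlt
  have hx : (0:ℝ) < x := lt_of_le_of_lt y.coe_nonneg (by exact_mod_cast hlt)
  set q : ℝ := (y:ℝ) / (x:ℝ) with hq
  have hq0 : 0 ≤ q := div_nonneg y.coe_nonneg (le_of_lt hx)
  have hq1 : q < 1 := (div_lt_one hx).2 (by exact_mod_cast hlt)
  have habs : |q| < 1 := by rwa [abs_of_nonneg hq0]
  have key : ∀ n : ℕ, (1:ℝ) ≤ (n:ℝ) * q ^ n + q ^ n := by
    intro n
    have h1 := h n
    have hxn : (0:ℝ) < (x:ℝ)^n := pow_pos hx n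
    have : (1:ℝ) ≤ ((n:ℝ)+1) * q ^ n := by
      rw [hq, div_pow, ← mul_div_assoc, le_div_iff₀ hxn, one_mul]
      exact h1
    linarith [this]
  have t1 : Filter.Tendsto (fun n : ℕ => (n:ℝ) * q ^ n + q ^ n) Filter.atTop (nhds 0) := by
    have a := tendsto_pow_const_mul_const_pow_of_abs_lt_one 1 habs
    simp only [pow_one] at a
    have b := tendsto_pow_atTop_nhds_zero_of_abs_lt_one habs
    simpa using a.add b
  have : (1:ℝ) ≤ 0 := ge_of_tendsto' t1 key
  linarith

/-- Let `K` be a field with a non-archimedean absolute value `abs`.  If `p : A → ℝ≥0` is a map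
on a `K`-algebra `A` satisfying `p (f*g) = p f * p g`, `p 1 = 1` and `p (α) = abs α` for
constants `α ∈ K`, then `p` satisfies the triangle inequality iff it satisfies the
ultrametric inequality. -/
theorem stmt0 {K A : Type*} [Field K] [CommRing A] [Algebra K A]
    (abs : K → ℝ)
    (habs_nonneg : ∀ α, 0 ≤ abs α)
    (habs_mul : ∀ α β, abs (α * β) = abs α * abs β)
    (habs_add : ∀ α β, abs (α + β) ≤ max (abs α) (abs β))
    (habs_zero : ∀ α, abs α = 0 ↔ α = 0)
    (p : A → NNReal)
    (hp_mul : ∀ f g, p (f * g) = p f * p g)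
    (hp_one : p 1 = 1)
    (hp_ext : ∀ α : K, (p (algebraMap K A α) : ℝ) = abs α) :
    (∀ f g, p (f + g) ≤ p f + p g) ↔ (∀ f g, p (f + g) ≤ max (p f) (p g)) := by
  constructor
  · intro htri f g
    -- preliminaries
    have hp_zero : p 0 = 0 := by
      have := hp_ext 0
      rw [map_zero, (habs_zero 0).2 rfl] at this
      exact_mod_cast this
    have habs_one : abs 1 = 1 := by
      have := hp_ext 1
      rwa [map_one, hp_one, NNReal.coe_one, eq_comm] at this
    have habs_nat : ∀ n : ℕ, abs (n : K) ≤ 1 := by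
      intro n
      induction n with
      | zero => simp [(habs_zero 0).2 rfl]
      | succ n ih =>
          push_cast
          calc abs ((n:K) + 1) ≤ max (abs (n:K)) (abs 1) := habs_add _ _
            _ ≤ 1 := max_le ih (le_of_eq habs_one)
    have hp_nat : ∀ n : ℕ, p ((n : ℕ) : A) ≤ 1 := by
      intro n
      have h1 : ((n : ℕ) : A) = algebraMap K A ((n : ℕ) : K) := by
        rw [map_natCast]
      rw [← NNReal.coe_le_coe, NNReal.coe_one, h1, hp_ext]
      exact habs_nat n
    have hp_pow : ∀ (x : A) (n : ℕ), p (x ^ n) = p x ^ n := by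
      intro x n
      induction n with
      | zero => simpa using hp_one
      | succ n ih => rw [pow_succ, pow_succ, hp_mul, ih]
    have hp_sum : ∀ (s : Finset ℕ) (u : ℕ → A), p (∑ i ∈ s, u i) ≤ ∑ i ∈ s, p (u i) := by
      intro s u
      induction s using Finset.cons_induction with
      | empty => simp [hp_zero]
      | cons a s ha ih =>
          rw [Finset.sum_cons, Finset.sum_cons]
          exact (htri _ _).trans (add_le_add_right ih _)
    set M : NNReal := max (p f) (p g) with hM
    have key : ∀ n : ℕ, (p (f + g) : ℝ) ^ n ≤ (n + 1) * (M : ℝ) ^ n := by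
      intro n
      have hbin : (f + g) ^ n = ∑ k ∈ Finset.range (n + 1), f ^ k * g ^ (n - k) * (n.choose k : A) :=
        add_pow f g n
      have hterm : ∀ k ∈ Finset.range (n + 1),
          p (f ^ k * g ^ (n - k) * (n.choose k : A)) ≤ M ^ n := by
        intro k hk
        rw [Finset.mem_range] at hk
        rw [hp_mul, hp_mul, hp_pow, hp_pow]
        calc p f ^ k * p g ^ (n - k) * p ((n.choose k : ℕ) : A)
            ≤ M ^ k * M ^ (n - k) * 1 := by
              gcongr
              · exact le_max_left _ _
              · exact le_max_right _ _
              · exact hp_nat _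
          _ = M ^ n := by
              rw [mul_one, ← pow_add]
              congr 1
              omega
      have h1 : p ((f + g) ^ n) ≤ (n + 1) * M ^ n := by
        rw [hbin]
        calc p (∑ k ∈ Finset.range (n + 1), f ^ k * g ^ (n - k) * (n.choose k : A))
            ≤ ∑ k ∈ Finset.range (n + 1), p (f ^ k * g ^ (n - k) * (n.choose k : A)) :=
              hp_sum _ _
          _ ≤ ∑ _k ∈ Finset.range (n + 1), M ^ n := Finset.sum_le_sum hterm
          _ = (n + 1) * M ^ n := by
              rw [Finset.sum_const, Finset.card_range, nsmul_eq_mul]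
              push_cast
              ring
      rw [hp_pow] at h1
      have := NNReal.coe_le_coe.2 h1
      push_cast at this
      convert this using 2 <;> push_cast <;> ring
    exact aux_pow_le key
  · intro hult f g
    exact (hult f g).trans (max_le (le_add_of_nonneg_right zero_le)
      (le_add_of_nonneg_left zero_le))
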